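/- In K[x_1,x_2,x_3], if u is a fixed empty element of a monomial set V ⊂ M^d for index i, then x_i u is a fixed empty element of MV (viewed as a subset of M^{d+1}) for index i; in particular x_i u ∉ MV. -/
import Mathlib


open Finset

/-- Monomials of `K[x_1,…,x_n]` are encoded as exponent vectors `Fin n → ℕ`.
`mulVarsOn S W = {x_j · w : w ∈ W, j ∈ S}`. -/
def mulVarsOn {n : ℕ} (S : Finset (Fin n)) (W : Finset (Fin n → ℕ)) :
    Finset (Fin n → ℕ) :=
  W.biUnion fun v => S.image fun j => v + Pi.single j 1

/-- `MV = {x_j · v : v ∈ V, 1 ≤ j ≤ n}`. -/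
def mulVars {n : ℕ} (W : Finset (Fin n → ℕ)) : Finset (Fin n → ℕ) :=
  mulVarsOn Finset.univ W

/-- `IsBinRep m h p f` says that `h = ∑_{j=p}^{m} C(f j + j, j)` is the `m`-th
binomial representation of `h`: `1 ≤ p ≤ m` and `f` is weakly increasing on `[p,m]`. -/
def IsBinRep (m h p : ℕ) (f : ℕ → ℕ) : Prop :=
  1 ≤ p ∧ p ≤ m ∧ (∀ j k, p ≤ j → j ≤ k → k ≤ m → f j ≤ f k) ∧
    h = ∑ j ∈ Finset.Icc p m, Nat.choose (f j + j) j

/-- `h^{<m>} = ∑_{j=p}^{m} C(f j + j + 1, j)` for the `m`-th binomial representation `(p, f)`. -/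
def upVal (m p : ℕ) (f : ℕ → ℕ) : ℕ :=
  ∑ j ∈ Finset.Icc p m, Nat.choose (f j + j + 1) j

/-- `h_{<<m>>} = ∑_{j=p}^{m} C(f j + j - 1, j - 1)` for the `m`-th binomial representation `(p, f)`. -/
def downVal (m p : ℕ) (f : ℕ → ℕ) : ℕ :=
  ∑ j ∈ Finset.Icc p m, Nat.choose (f j + j - 1) (j - 1)

/-- `W` is a Gotzmann set with respect to the set of variables `S`:
either `W = ∅`, or (in at most one variable) `|SW| = |W|`, or
`|SW| = |W|^{<|S|-1>}` computed from the `(|S|-1)`-th binomial representation of `|W|`. -/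
def IsGotzmannOn {n : ℕ} (S : Finset (Fin n)) (W : Finset (Fin n → ℕ)) : Prop :=
  W = ∅ ∨ (S.card ≤ 1 ∧ (mulVarsOn S W).card = W.card) ∨
    ∃ p f, IsBinRep (S.card - 1) W.card p f ∧
      (mulVarsOn S W).card = upVal (S.card - 1) p f

/-- `V` is a Gotzmann set of monomials of `K[x_1,…,x_n]`: `|MV| = |V|^{<n-1>}`. -/
def IsGotzmann {n : ℕ} (W : Finset (Fin n → ℕ)) : Prop :=
  IsGotzmannOn Finset.univ W

/-- The exponent vector of `gcd(V)` (pointwise minimum of the exponent vectors). -/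
noncomputable def gcdMon {n : ℕ} (V : Finset (Fin n → ℕ)) : Fin n → ℕ :=
  fun j => sInf ((fun v => v j) '' (V : Set (Fin n → ℕ)))

/-- `w` comes strictly earlier than `v` in the lexicographic order on monomials
(`x_1 > x_2 > … > x_n`, larger exponent vector comes earlier). -/
def lexEarlier {n : ℕ} (w v : Fin n → ℕ) : Prop :=
  ∃ i : Fin n, (∀ j, j < i → w j = v j) ∧ v i < w i

/-- `V` is a lexsegment set of monomials of degree `d`: an initial segment of
the monomials of degree `d` in lexicographic order. -/
def IsLexSegment (n d : ℕ) (V : Finset (Fin n → ℕ)) : Prop :=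
  (∀ v ∈ V, ∑ j, v j = d) ∧
    ∀ v ∈ V, ∀ w : Fin n → ℕ, (∑ j, w j = d) → lexEarlier w v → w ∈ V

/-- `V` is strongly stable: for `u ∈ V`, `i < j` with `x_j ∣ u`, also `(x_i/x_j)·u ∈ V`. -/
def IsStronglyStable {n : ℕ} (V : Finset (Fin n → ℕ)) : Prop :=
  ∀ u ∈ V, ∀ i j : Fin n, i < j → 0 < u j →
    (u + Pi.single i 1 - Pi.single j 1) ∈ V

/-- `u` is a fixed empty element of `V` (of degree `d`) for `i`: no monomial of
degree `d` which is under `u` for `i` (all exponents except possibly the `i`-th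
bounded by those of `u`) belongs to `V`. -/
def IsFEE (n d : ℕ) (V : Finset (Fin n → ℕ)) (i : Fin n) (u : Fin n → ℕ) : Prop :=
  u ∉ V ∧ ∀ v : Fin n → ℕ, (∑ j, v j = d) → (∀ j, j ≠ i → v j ≤ u j) → v ∉ V

/-- In three variables, if `u` is a fixed empty element of `V ⊆ M^d` for `i`, then
`x_i u` is a fixed empty element of `MV ⊆ M^{d+1}` for `i`; in particular `x_i u ∉ MV`. -/
theorem fee_shadow (d : ℕ) (V : Finset (Fin 3 → ℕ))
    (hdeg : ∀ v ∈ V, ∑ j, v j = d) (i : Fin 3) (u : Fin 3 → ℕ)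
    (hu : ∑ j, u j = d) (hfee : IsFEE 3 d V i u) :
    IsFEE 3 (d + 1) (mulVars V) i (u + Pi.single i 1) := by

  have key : ∀ v : Fin 3 → ℕ, (∑ j, v j = d + 1) → (∀ j, j ≠ i → v j ≤ u j) →
      v ∉ mulVars V := by
    intro v hvdeg hvle hv
    simp only [mulVars, mulVarsOn, Finset.mem_biUnion, Finset.mem_image,
      Finset.mem_univ, true_and] at hv
    obtain ⟨w, hwV, k, hk⟩ := hv
    refine hfee.2 w (hdeg w hwV) ?_ hwV
    intro j hj
    have hle : w j ≤ v j := by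
      rw [← hk]; simp [Pi.single_apply]
    exact hle.trans (hvle j hj)
  constructor
  · apply key
    · simp [Finset.sum_add_distrib, hu, Pi.single_apply]
    · intro j hj; simp [Pi.single_apply, hj]
  · intro v hvdeg hvle
    apply key v hvdeg
    intro j hj
    have := hvle j hj
    simpa [Pi.single_apply, hj] using this
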